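/- Let q be a prime power and k a positive integer, n = 4k. Let S(k) = (q^k - 1)⌊(q^k - 2)/2⌋(q^{4k} - 1) + ⌊(q^k - 2)/2⌋(q^{4k} - 1)/(q - 1) and let B(k) = (q^{4k} - 1)(q^{4k-1} - 1)/((q^k - 1)(q^{k-1} - 1)). Then the ratio S(k)/B(k) tends to 1/2 as k → ∞. -/

import Mathlib

open Filter

/-- Auxiliary rational function used in the limit computation. -/
noncomputable def auxF (c : ℝ) : ℝ → ℝ := fun u =>
  (1 - u) * (c⁻¹ - u) * ((1 - u) * (c - 1) + u) / ((c - 1) * (c⁻¹ - u ^ 4))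

set_option maxHeartbeats 2000000 in
set_option maxHeartbeats 1000000 in
/-- Key algebraic identity, with `y` an atom standing for `c^(k-2)` and `f` for
the floor term. -/
lemma auxF_eq (c y f : ℝ) (hc0 : c ≠ 0) (hcm1 : c - 1 ≠ 0) (hy0 : y ≠ 0)
    (h1 : y * c ^ 2 - 1 ≠ 0) (h2 : y * c - 1 ≠ 0)
    (h3 : y ^ 4 * c ^ 8 - 1 ≠ 0) (h4 : y ^ 4 * c ^ 7 - 1 ≠ 0) :
    f / (y * c ^ 2) * auxF c ((y * c ^ 2)⁻¹) =
      ((y * c ^ 2 - 1) * f * (y ^ 4 * c ^ 8 - 1)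
          + f * (y ^ 4 * c ^ 8 - 1) / (c - 1))
        / ((y ^ 4 * c ^ 8 - 1) * (y ^ 4 * c ^ 7 - 1)
          / ((y * c ^ 2 - 1) * (y * c - 1))) := by
  have u4 : ((y * c ^ 2)⁻¹ : ℝ) ^ 4 = (y ^ 4 * c ^ 8)⁻¹ := by
    rw [inv_pow]; congr 1; ring
  have r1 : (1 : ℝ) - (y * c ^ 2)⁻¹ = (y * c ^ 2 - 1) / (y * c ^ 2) := by
    field_simp
  have r2 : c⁻¹ - (y * c ^ 2)⁻¹ = (y * c - 1) / (y * c ^ 2) := by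
    field_simp
  have r3 : c⁻¹ - (y ^ 4 * c ^ 8)⁻¹ = (y ^ 4 * c ^ 7 - 1) / (y ^ 4 * c ^ 8) := by
    field_simp
  simp only [auxF, u4, r1, r2, r3]
  field_simp

/-- With
`S(k) = (q^k-1)⌊(q^k-2)/2⌋(q^{4k}-1) + ⌊(q^k-2)/2⌋(q^{4k}-1)/(q-1)` and
`B(k) = (q^{4k}-1)(q^{4k-1}-1)/((q^k-1)(q^{k-1}-1))`, the ratio `S(k)/B(k)`
tends to `1/2` as `k → ∞`. -/
theorem stmt_12 (q : ℕ) (hq : IsPrimePow q)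
    (S B : ℕ → ℝ)
    (hS : ∀ k : ℕ, S k =
      ((q : ℝ) ^ k - 1) * (((q ^ k - 2) / 2 : ℕ) : ℝ) * ((q : ℝ) ^ (4 * k) - 1)
        + (((q ^ k - 2) / 2 : ℕ) : ℝ) * ((q : ℝ) ^ (4 * k) - 1) / ((q : ℝ) - 1))
    (hB : ∀ k : ℕ, B k =
      ((q : ℝ) ^ (4 * k) - 1) * ((q : ℝ) ^ (4 * k - 1) - 1)
        / (((q : ℝ) ^ k - 1) * ((q : ℝ) ^ (k - 1) - 1))) :
    Tendsto (fun k : ℕ => S k / B k) atTop (nhds (1 / 2)) := by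
  have hq2 : 2 ≤ q := hq.two_le
  set c : ℝ := (q : ℝ) with hcdef
  have hc2 : (2 : ℝ) ≤ c := by rw [hcdef]; exact_mod_cast hq2
  have hc1 : (1 : ℝ) < c := by linarith
  have hc0 : c ≠ 0 := by linarith
  have hcpos : (0 : ℝ) < c := by linarith
  have hcm1 : c - 1 ≠ 0 := by intro h; nlinarith
  -- `c^k → ∞`
  have hxto : Tendsto (fun k : ℕ => c ^ k) atTop atTop :=
    tendsto_pow_atTop_atTop_of_one_lt hc1
  have hu : Tendsto (fun k : ℕ => (c ^ k)⁻¹) atTop (nhds 0) :=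
    hxto.inv_tendsto_atTop
  -- the floor part divided by `c^k` tends to `1/2`
  have hg : Tendsto (fun k : ℕ => (((q ^ k - 2) / 2 : ℕ) : ℝ) / c ^ k) atTop
      (nhds (1 / 2)) := by
    have hlow : Tendsto (fun k : ℕ => 1 / 2 - (3 / 2) * (c ^ k)⁻¹) atTop (nhds (1 / 2)) := by
      have h0 : Tendsto (fun _ : ℕ => (1 / 2 : ℝ)) atTop (nhds (1 / 2)) :=
        tendsto_const_nhds
      have := h0.sub (hu.const_mul (3 / 2))
      simpa using this
    refine tendsto_of_tendsto_of_tendsto_of_le_of_le' hlow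
      (tendsto_const_nhds (x := (1 / 2 : ℝ))) ?_ ?_
    · filter_upwards [eventually_ge_atTop 2] with k hk
      have hle1 : 2 ^ 2 ≤ 2 ^ k := Nat.pow_le_pow_right (by norm_num) hk
      have hle2 : 2 ^ k ≤ q ^ k := Nat.pow_le_pow_left hq2 k
      have hpk : 4 ≤ q ^ k := by omega
      have hxpos : (0 : ℝ) < c ^ k := pow_pos hcpos k
      have hdiv : q ^ k - 3 ≤ 2 * ((q ^ k - 2) / 2) := by omega
      have hcastL : ((q ^ k - 3 : ℕ) : ℝ) = c ^ k - 3 := by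
        rw [Nat.cast_sub (by omega : 3 ≤ q ^ k), hcdef]
        push_cast
        ring
      have hR : c ^ k - 3 ≤ 2 * (((q ^ k - 2) / 2 : ℕ) : ℝ) := by
        rw [← hcastL]
        exact_mod_cast hdiv
      rw [le_div_iff₀ hxpos]
      have hic : (c ^ k)⁻¹ * c ^ k = 1 := inv_mul_cancel₀ (ne_of_gt hxpos)
      nlinarith [hR]
    · filter_upwards [eventually_ge_atTop 2] with k hk
      have hle1 : 2 ^ 2 ≤ 2 ^ k := Nat.pow_le_pow_right (by norm_num) hk
      have hle2 : 2 ^ k ≤ q ^ k := Nat.pow_le_pow_left hq2 k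
      have hpk : 4 ≤ q ^ k := by omega
      have hxpos : (0 : ℝ) < c ^ k := pow_pos hcpos k
      have hdiv : 2 * ((q ^ k - 2) / 2) ≤ q ^ k - 2 := Nat.mul_div_le _ _
      have hcastU : ((q ^ k - 2 : ℕ) : ℝ) = c ^ k - 2 := by
        rw [Nat.cast_sub (by omega : 2 ≤ q ^ k), hcdef]
        push_cast
        ring
      have hR : 2 * (((q ^ k - 2) / 2 : ℕ) : ℝ) ≤ c ^ k - 2 := by
        rw [← hcastU]
        exact_mod_cast hdiv
      rw [div_le_iff₀ hxpos]
      nlinarith [hR]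
  -- the rational part tends to 1
  have hF0 : auxF c 0 = 1 := by
    simp only [auxF]
    rw [sub_zero, sub_zero]
    field_simp
    simp
  have hFc : ContinuousAt (auxF c) 0 := by
    unfold auxF
    apply ContinuousAt.div
    · fun_prop
    · fun_prop
    · simp only [ne_eq, zero_pow, sub_zero]
      norm_num
      exact ⟨hcm1, hc0⟩
  have hFt : Tendsto (fun k : ℕ => auxF c ((c ^ k)⁻¹)) atTop (nhds 1) := by
    have := (hFc.tendsto).comp hu
    rwa [hF0] at this
  have hmain : Tendsto
      (fun k : ℕ => (((q ^ k - 2) / 2 : ℕ) : ℝ) / c ^ k * auxF c ((c ^ k)⁻¹)) atTop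
      (nhds (1 / 2)) := by
    have := hg.mul hFt
    simpa using this
  refine hmain.congr' ?_
  filter_upwards [eventually_ge_atTop 2] with k hk
  obtain ⟨j, rfl⟩ : ∃ j, k = j + 2 := ⟨k - 2, by omega⟩
  rw [hS, hB]
  have n2 : 4 * (j + 2) - 1 = 4 * j + 7 := by omega
  have n3 : j + 2 - 1 = j + 1 := by omega
  have n1 : 4 * (j + 2) = 4 * j + 8 := by omega
  rw [n2, n3, n1]
  set y : ℝ := c ^ j with hy
  have E1 : c ^ (j + 2) = y * c ^ 2 := by rw [hy, pow_add]
  have E2 : c ^ (j + 1) = y * c := by rw [hy, pow_add, pow_one]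
  have E3 : c ^ (4 * j + 8) = y ^ 4 * c ^ 8 := by rw [hy]; ring
  have E4 : c ^ (4 * j + 7) = y ^ 4 * c ^ 7 := by rw [hy]; ring
  have hypos : (0 : ℝ) < y := pow_pos hcpos j
  have hy1 : (1 : ℝ) ≤ y := one_le_pow₀ hc1.le
  have hy0 : y ≠ 0 := ne_of_gt hypos
  have hy4 : (1 : ℝ) ≤ y ^ 4 := one_le_pow₀ hy1
  have hc8 : (1 : ℝ) < c ^ 8 := one_lt_pow₀ hc1 (by norm_num)
  have hc7 : (1 : ℝ) < c ^ 7 := one_lt_pow₀ hc1 (by norm_num)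
  have h1 : y * c ^ 2 - 1 ≠ 0 := by
    have : (1 : ℝ) < y * c ^ 2 := by nlinarith
    exact sub_ne_zero.mpr (ne_of_gt this)
  have h2 : y * c - 1 ≠ 0 := by
    have : (1 : ℝ) < y * c := by nlinarith
    exact sub_ne_zero.mpr (ne_of_gt this)
  have h3 : y ^ 4 * c ^ 8 - 1 ≠ 0 := by
    have : (1 : ℝ) < y ^ 4 * c ^ 8 := by nlinarith
    exact sub_ne_zero.mpr (ne_of_gt this)
  have h4 : y ^ 4 * c ^ 7 - 1 ≠ 0 := by
    have : (1 : ℝ) < y ^ 4 * c ^ 7 := by nlinarith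
    exact sub_ne_zero.mpr (ne_of_gt this)
  rw [E1, E2, E3, E4]
  exact auxF_eq c y _ hc0 hcm1 hy0 h1 h2 h3 h4
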